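/- If, under the hypotheses and conclusions of the Borwein–Preiss vector variational principle with N = +∞, x ∈ X \ {x̄} is such that the series Σ_{i≥0} δ_i ρ(x,x_i) converges, then f(x̄) + (Σ_{i≥0} δ_i ρ(x̄,x_i))·c̄ − f(x) − (Σ_{i≥0} δ_i ρ(x,x_i))·c̄ ∉ C. -/

import Mathlib

open Filter Topology

/-- Under the setting of the Borwein–Preiss vector variational principle
with `N = +∞` (conclusion (iv) assumed for the point `xbar` and sequence `xs`), if
`x ≠ xbar` and the series `Σ δ_i ρ(x, x_i)` converges, then
`f xbar + (Σ δ_i ρ(xbar, x_i)) • cbar - f x - (Σ δ_i ρ(x, x_i)) • cbar ∉ C`. -/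
theorem stmt_13 {X : Type*} [MetricSpace X] [CompleteSpace X]
    {Y : Type*} [NormedAddCommGroup Y] [NormedSpace ℝ Y] (C : Set Y)
    (hC0 : (0:Y) ∈ C)
    (hCadd : ∀ a ∈ C, ∀ b ∈ C, a + b ∈ C)
    (hCsmul : ∀ a ∈ C, ∀ t : ℝ, 0 < t → t • a ∈ C)
    (hCpointed : C ∩ (-C) = {(0:Y)}) (hCclosed : IsClosed C)
    (cbar : Y) (hcbar : cbar ∈ interior C)
    (f : X → Y)
    (ρ : X → X → ℝ) (hρnonneg : ∀ x y, 0 ≤ ρ x y)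
    (δs : ℕ → ℝ) (hδs : ∀ i, 0 < δs i)
    (xbar : X) (xs : ℕ → X)
    (hSumbar : Summable (fun i => δs i * ρ xbar (xs i)))
    (hiv : ∀ x : X, x ≠ xbar → ∃ m0 : ℕ, ∀ m ≥ m0,
      f xbar + (∑' i, δs i * ρ xbar (xs i)) • cbar - f x
        - (∑ i ∈ Finset.range (m + 1), δs i * ρ x (xs i)) • cbar ∉ C) :
    ∀ x : X, x ≠ xbar → Summable (fun i => δs i * ρ x (xs i)) →
      f xbar + (∑' i, δs i * ρ xbar (xs i)) • cbar - f x
        - (∑' i, δs i * ρ x (xs i)) • cbar ∉ C := by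
  intro x hx hsum hmem
  obtain ⟨m0, hm0⟩ := hiv x hx
  apply hm0 m0 le_rfl
  set S : ℝ := ∑' i, δs i * ρ x (xs i)
  set P : ℝ := ∑ i ∈ Finset.range (m0 + 1), δs i * ρ x (xs i)
  have hPS : P ≤ S := Summable.sum_le_tsum _ (fun i _ => mul_nonneg (hδs i).le (hρnonneg _ _)) hsum
  have key : f xbar + (∑' i, δs i * ρ xbar (xs i)) • cbar - f x - P • cbar
      = (f xbar + (∑' i, δs i * ρ xbar (xs i)) • cbar - f x - S • cbar) + (S - P) • cbar := by
    rw [sub_smul]; abel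
  rw [key]
  rcases eq_or_lt_of_le hPS with h | h
  · simp [← h]
    simpa [← h] using hmem
  · exact hCadd _ hmem _ (hCsmul cbar (interior_subset hcbar) _ (sub_pos.2 h))
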